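/- The Fibonacci-based Huffman sequence is canonically delta-correlated: for even M ≥ 2, N = 2M+3, and real s ≠ 0, the aperiodic auto-correlation A_d(s) = ∑_i H_i^N(s)·H_{i+d}^N(s) of H^N(s) satisfies A_0(s) = 2 + s²·F_{M+1}(s)² + 4·F_M(s)·F_{M+2}(s), A_{N−1}(s) = A_{−(N−1)}(s) = −1, and A_d(s) = 0 for all shifts d with 0 < |d| < N−1. -/

import Mathlib

namespace HuffmanAux

/-- split a sum over Icc at b -/
lemma sum_Icc_split (f : ℤ → ℝ) {a b c : ℤ} (h1 : a ≤ b + 1) (h2 : b ≤ c) :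
    ∑ i ∈ Finset.Icc a c, f i
      = (∑ i ∈ Finset.Icc a b, f i) + ∑ i ∈ Finset.Icc (b+1) c, f i := by
  rw [← Finset.sum_union]
  · congr 1
    ext x
    simp only [Finset.mem_union, Finset.mem_Icc]
    omega
  · rw [Finset.disjoint_left]
    intro x hx hx'
    simp only [Finset.mem_Icc] at hx hx'
    omega

lemma sum_Icc_singleton (f : ℤ → ℝ) (a : ℤ) : ∑ i ∈ Finset.Icc a a, f i = f a := by
  rw [Finset.Icc_self, Finset.sum_singleton]

lemma sum_Icc_shift (f : ℤ → ℝ) (a b c : ℤ) :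
    ∑ i ∈ Finset.Icc a b, f i = ∑ j ∈ Finset.Icc (a - c) (b - c), f (j + c) := by
  rw [show Finset.Icc a b = Finset.Icc (a - c + c) (b - c + c) by congr 1 <;> ring]
  rw [← Finset.map_add_right_Icc, Finset.sum_map]
  rfl

lemma zpow_even {n : ℤ} (h : n % 2 = 0) : (-1:ℝ)^n = 1 :=
  (Int.even_iff.mpr h).neg_one_zpow

lemma zpow_odd {n : ℤ} (h : n % 2 = 1) : (-1:ℝ)^n = -1 :=
  (Int.odd_iff.mpr h).neg_one_zpow

lemma alt_sum {a b : ℤ} (h : a ≤ b + 1) :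
    ∑ k ∈ Finset.Icc a b, (-1:ℝ)^k = ((-1:ℝ)^a + (-1:ℝ)^b)/2 := by
  have key : ∀ b : ℤ, a - 1 ≤ b → ∑ k ∈ Finset.Icc a b, (-1:ℝ)^k = ((-1:ℝ)^a + (-1:ℝ)^b)/2 := by
    refine Int.le_induction ?_ ?_
    · rw [Finset.Icc_eq_empty (by omega), Finset.sum_empty]
      rw [show a - 1 = a + (-1) by ring, zpow_add₀ (by norm_num : (-1:ℝ) ≠ 0)]
      norm_num
    · intro n hn ih
      rw [sum_Icc_split (fun k => (-1:ℝ)^k) (by omega : a ≤ n + 1) (by omega : n ≤ n + 1),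
        ih, sum_Icc_singleton]
      rw [zpow_add₀ (by norm_num : (-1:ℝ) ≠ 0) n 1]
      ring
  exact key b (by omega)




lemma hE1 (k : ℤ) : (-1:ℝ)^(k+1) = -(-1:ℝ)^k := by
  rw [zpow_add_one₀ (by norm_num : (-1:ℝ) ≠ 0)]; ring

variable {s : ℝ} {F : ℤ → ℝ}

lemma docagne (h0 : F 0 = 0) (h1 : F 1 = 1)
    (hrec : ∀ n : ℤ, F (n + 2) = s * F (n + 1) + F n) :
    ∀ n m : ℤ, F m * F (n+1) - F (m+1) * F n = (-1:ℝ)^n * F (m-n) := by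
  have key : ∀ n : ℤ, (∀ m : ℤ, F m * F (n+1) - F (m+1) * F n = (-1:ℝ)^n * F (m-n)) ∧
      (∀ m : ℤ, F m * F ((n+1)+1) - F (m+1) * F (n+1) = (-1:ℝ)^(n+1) * F (m-(n+1))) := by
    intro n
    induction n using Int.induction_on with
    | zero =>
      constructor
      · intro m
        have hz0 : (-1:ℝ)^(0:ℤ) = 1 := by norm_num
        rw [hz0]
        linear_combination (norm := (ring_nf; try ring1)) F m * h1 - F (m+1) * h0
      · intro m
        have hz1 : (-1:ℝ)^((0:ℤ)+1) = -1 := by norm_num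
        rw [hz1]
        linear_combination (norm := (ring_nf; try ring1))
          F m * hrec 0 - F 1 * hrec (m-1) - F (m-1) * h1 + F m * h0
    | succ n ih =>
      obtain ⟨ih1, ih2⟩ := ih
      refine ⟨ih2, fun m => ?_⟩
      linear_combination (norm := (ring_nf; try ring1))
        F m * hrec ((n:ℤ)+1) + s * ih2 m + ih1 m - F (m+1) * hrec (n:ℤ)
          + (-1:ℝ)^(n:ℤ) * hrec (m-(n:ℤ)-2)
          + (F (m-(n:ℤ)-2)) * (hE1 (n:ℤ)) - (F (m-(n:ℤ)-2)) * (hE1 ((n:ℤ)+1))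
          + (s * F (m-(n:ℤ)-1)) * (hE1 (n:ℤ))
    | pred n ih =>
      obtain ⟨ih1, ih2⟩ := ih
      constructor
      · intro m
        linear_combination (norm := (ring_nf; try ring1))
          (-s) * ih1 m + ih2 m - F m * hrec (-(n:ℤ)) + F (m+1) * hrec (-(n:ℤ)-1)
            + (-1:ℝ)^(-(n:ℤ)) * hrec (m+(n:ℤ)-1)
            + (-(F (m+(n:ℤ)+1))) * hE1 (-(n:ℤ)-1) + (F (m+(n:ℤ)-1)) * hE1 (-(n:ℤ))
      · intro m
        linear_combination (norm := (ring_nf; try ring1)) ih1 m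
  exact fun n m => (key n).1 m



variable {s : ℝ} {F : ℤ → ℝ}

lemma Fneg1 (h0 : F 0 = 0) (h1 : F 1 = 1)
    (hrec : ∀ n : ℤ, F (n + 2) = s * F (n + 1) + F n) : F (-1) = 1 := by
  linear_combination (norm := (ring_nf; try ring1)) (-1) * hrec (-1) + h1 - s * h0

lemma Fadd (h0 : F 0 = 0) (h1 : F 1 = 1)
    (hrec : ∀ n : ℤ, F (n + 2) = s * F (n + 1) + F n) :
    ∀ n m : ℤ, F (m + n) = F (m+1) * F n + F m * F (n-1) := by
  have hm1 := Fneg1 h0 h1 hrec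
  have key : ∀ n : ℤ, (∀ m : ℤ, F (m + n) = F (m+1) * F n + F m * F (n-1)) ∧
      (∀ m : ℤ, F (m + (n+1)) = F (m+1) * F (n+1) + F m * F ((n+1)-1)) := by
    intro n
    induction n using Int.induction_on with
    | zero =>
      constructor
      · intro m
        linear_combination (norm := (ring_nf; try ring1)) (-(F (m+1))) * h0 + (-(F m)) * hm1
      · intro m
        linear_combination (norm := (ring_nf; try ring1)) (-(F (m+1))) * h1 + (-(F m)) * h0
    | succ n ih =>
      obtain ⟨ih1, ih2⟩ := ih
      refine ⟨ih2, fun m => ?_⟩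
      linear_combination (norm := (ring_nf; try ring1))
        hrec (m+(n:ℤ)) + s * ih2 m + ih1 m - F (m+1) * hrec (n:ℤ) - F m * hrec ((n:ℤ)-1)
    | pred n ih =>
      obtain ⟨ih1, ih2⟩ := ih
      constructor
      · intro m
        linear_combination (norm := (ring_nf; try ring1))
          (- 1) * hrec (m-(n:ℤ)-1) + ih2 m - s * ih1 m
            + F (m+1) * hrec (-(n:ℤ)-1) + F m * hrec (-(n:ℤ)-2)
      · intro m
        linear_combination (norm := (ring_nf; try ring1)) ih1 m
  exact fun n m => (key n).1 m

lemma Fneg (h0 : F 0 = 0) (h1 : F 1 = 1)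
    (hrec : ∀ n : ℤ, F (n + 2) = s * F (n + 1) + F n) :
    ∀ n : ℤ, (-1:ℝ)^n * F (-n) = -F n := by
  intro n
  have := docagne h0 h1 hrec n 0
  linear_combination (norm := (ring_nf; try ring1)) (-1) * this + F (n+1) * h0 - F n * h1

lemma Fneg_even (h0 : F 0 = 0) (h1 : F 1 = 1)
    (hrec : ∀ n : ℤ, F (n + 2) = s * F (n + 1) + F n)
    {n : ℤ} (hn : n % 2 = 0) : F (-n) = -F n := by
  have := Fneg h0 h1 hrec n
  rw [(Int.even_iff.mpr hn).neg_one_zpow] at this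
  linarith

lemma Fneg_odd (h0 : F 0 = 0) (h1 : F 1 = 1)
    (hrec : ∀ n : ℤ, F (n + 2) = s * F (n + 1) + F n)
    {n : ℤ} (hn : n % 2 = 1) : F (-n) = F n := by
  have := Fneg h0 h1 hrec n
  rw [(Int.odd_iff.mpr hn).neg_one_zpow] at this
  linarith

lemma telescope (h0 : F 0 = 0) (h1 : F 1 = 1)
    (hrec : ∀ n : ℤ, F (n + 2) = s * F (n + 1) + F n) :
    ∀ p q a b : ℤ, a ≤ b + 1 →
      s * ∑ i ∈ Finset.Icc a b, F (i+p) * F (i+q)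
        = F (b+1+p) * F (b+q) - F (a+p) * F (a+q-1)
          + F (q-p) * (((-1:ℝ)^(a+p+1) + (-1:ℝ)^(b+p+1))/2) := by
  intro p q a
  have key : ∀ b : ℤ, a - 1 ≤ b →
      s * ∑ i ∈ Finset.Icc a b, F (i+p) * F (i+q)
        = F (b+1+p) * F (b+q) - F (a+p) * F (a+q-1)
          + F (q-p) * (((-1:ℝ)^(a+p+1) + (-1:ℝ)^(b+p+1))/2) := by
    refine Int.le_induction ?_ ?_
    · rw [Finset.Icc_eq_empty (by omega : ¬ a ≤ a - 1), Finset.sum_empty]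
      linear_combination (norm := (ring_nf; try ring1)) (- (F (q-p))/2) * hE1 (a+p)
    · intro b hb ih
      rw [sum_Icc_split _ (by omega : a ≤ b + 1) (by omega : b ≤ b + 1),
        sum_Icc_singleton, mul_add, ih]
      linear_combination (norm := (ring_nf; try ring1))
        (- (F (b+1+q))) * hrec (b+p) + docagne h0 h1 hrec (b+p) (b+q)
          + F (q-p) * hE1 (b+p) - (F (q-p)/2) * hE1 (b+p+1)
  exact fun b hb => key b (by omega)



variable {s : ℝ} {F : ℤ → ℝ} {M : ℤ} {H : ℤ → ℝ} {A : ℤ → ℝ}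


lemma sum_Icc_split' (f : ℤ → ℝ) {a b b' c : ℤ} (h1 : a ≤ b') (h2 : b ≤ c) (h3 : b' = b + 1) :
    ∑ i ∈ Finset.Icc a c, f i
      = (∑ i ∈ Finset.Icc a b, f i) + ∑ i ∈ Finset.Icc b' c, f i := by
  subst h3
  exact sum_Icc_split f (by omega) h2

lemma Hout (hM2 : 2 ≤ M)
    (hH : ∀ i : ℤ, H i =
      if i = 1 then 1
      else if 2 ≤ i ∧ i ≤ M + 1 then 2 * s * F (i - 1)
      else if i = M + 2 then s * F (M + 1) - 2 * F M
      else if M + 3 ≤ i ∧ i ≤ 2 * M + 2 then 2 * s * F (i - (2 * M + 3))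
      else if i = 2 * M + 3 then -1
      else 0) :
    ∀ i : ℤ, i < 1 ∨ 2 * M + 3 < i → H i = 0 := by
  intro i hi
  rw [hH i, if_neg (by omega), if_neg (by omega), if_neg (by omega), if_neg (by omega),
    if_neg (by omega)]

lemma Asymm (hM2 : 2 ≤ M)
    (hH : ∀ i : ℤ, H i =
      if i = 1 then 1
      else if 2 ≤ i ∧ i ≤ M + 1 then 2 * s * F (i - 1)
      else if i = M + 2 then s * F (M + 1) - 2 * F M
      else if M + 3 ≤ i ∧ i ≤ 2 * M + 2 then 2 * s * F (i - (2 * M + 3))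
      else if i = 2 * M + 3 then -1
      else 0)
    (hA : ∀ d : ℤ, A d = ∑ i ∈ Finset.Icc (1 : ℤ) (2 * M + 3), H i * H (i + d)) :
    ∀ d : ℤ, A (-d) = A d := by
  intro d
  have hout := Hout hM2 hH
  have hgrow : ∀ c a b : ℤ, a ≤ 1 → 2 * M + 3 ≤ b →
      ∑ i ∈ Finset.Icc a b, H i * H (i + c) = A c := by
    intro c a b ha hb
    rw [hA c]
    refine (Finset.sum_subset (Finset.Icc_subset_Icc ha hb) ?_).symm
    intro x hx hnx
    simp only [Finset.mem_Icc] at hx hnx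
    rw [hout x (by omega), zero_mul]
  set K : ℤ := (d.natAbs : ℤ) with hK
  have hK1 : -K ≤ d ∧ d ≤ K := by constructor <;> omega
  calc A (-d) = ∑ i ∈ Finset.Icc (1 - K) (2*M+3+K), H i * H (i + -d) :=
        (hgrow (-d) _ _ (by omega) (by omega)).symm
    _ = ∑ j ∈ Finset.Icc (1 - K - d) (2*M+3+K - d), H (j + d) * H (j + d + -d) :=
        sum_Icc_shift _ _ _ d
    _ = ∑ j ∈ Finset.Icc (1 - K - d) (2*M+3+K - d), H j * H (j + d) := by
        refine Finset.sum_congr rfl fun j hj => ?_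
        rw [show j + d + -d = j by ring]
        ring
    _ = A d := hgrow d _ _ (by omega) (by omega)

lemma caseD (hM2 : 2 ≤ M)
    (hH : ∀ i : ℤ, H i =
      if i = 1 then 1
      else if 2 ≤ i ∧ i ≤ M + 1 then 2 * s * F (i - 1)
      else if i = M + 2 then s * F (M + 1) - 2 * F M
      else if M + 3 ≤ i ∧ i ≤ 2 * M + 2 then 2 * s * F (i - (2 * M + 3))
      else if i = 2 * M + 3 then -1
      else 0)
    (hA : ∀ d : ℤ, A d = ∑ i ∈ Finset.Icc (1 : ℤ) (2 * M + 3), H i * H (i + d)) :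
    A (2 * M + 2) = -1 := by
  have hout := Hout hM2 hH
  rw [hA (2*M+2)]
  rw [sum_Icc_split' _ (show (1:ℤ) ≤ 2 by omega) (show (1:ℤ) ≤ 2*M+3 by omega) rfl]
  have p1 : ∑ i ∈ Finset.Icc (1:ℤ) 1, H i * H (i + (2*M+2)) = -1 := by
    rw [sum_Icc_singleton]
    rw [hH 1, hH (1 + (2*M+2))]
    rw [if_pos rfl, if_neg (by omega), if_neg (by omega), if_neg (by omega),
      if_neg (by omega), if_pos (by omega)]
    ring
  have p2 : ∑ i ∈ Finset.Icc (2:ℤ) (2*M+3), H i * H (i + (2*M+2)) = 0 := by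
    refine Finset.sum_eq_zero fun i hi => ?_
    simp only [Finset.mem_Icc] at hi
    rw [hout (i + (2*M+2)) (by omega), mul_zero]
  rw [p1, p2]
  ring


variable {s : ℝ} {F : ℤ → ℝ} {M : ℤ} {H : ℤ → ℝ} {A : ℤ → ℝ}

lemma caseZero (h0 : F 0 = 0) (h1 : F 1 = 1)
    (hrec : ∀ n : ℤ, F (n + 2) = s * F (n + 1) + F n)
    (hM2 : 2 ≤ M) (hMp : M % 2 = 0)
    (hH : ∀ i : ℤ, H i =
      if i = 1 then 1
      else if 2 ≤ i ∧ i ≤ M + 1 then 2 * s * F (i - 1)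
      else if i = M + 2 then s * F (M + 1) - 2 * F M
      else if M + 3 ≤ i ∧ i ≤ 2 * M + 2 then 2 * s * F (i - (2 * M + 3))
      else if i = 2 * M + 3 then -1
      else 0)
    (hA : ∀ d : ℤ, A d = ∑ i ∈ Finset.Icc (1 : ℤ) (2 * M + 3), H i * H (i + d)) :
    A 0 = 2 + s ^ 2 * (F (M + 1)) ^ 2 + 4 * F M * F (M + 2) := by
  rw [hA 0]
  rw [sum_Icc_split' _ (show (1:ℤ) ≤ 2 by omega) (show (1:ℤ) ≤ 2*M+3 by omega) (by ring)]
  rw [sum_Icc_split' _ (show (2:ℤ) ≤ M+2 by omega) (show M+1 ≤ 2*M+3 by omega) (by ring)]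
  rw [sum_Icc_split' _ (show M+2 ≤ M+3 by omega) (show M+2 ≤ 2*M+3 by omega) (by ring)]
  rw [sum_Icc_split' _ (show M+3 ≤ 2*M+3 by omega) (show 2*M+2 ≤ 2*M+3 by omega) (by ring)]
  have z0 : ∑ i ∈ Finset.Icc (1:ℤ) 1, H i * H (i + 0) = 1 := by
    rw [sum_Icc_singleton, hH 1, if_pos rfl, hH (1+0), if_pos (show (1:ℤ)+0 = 1 by omega)]
    norm_num
  have z1 : ∑ i ∈ Finset.Icc (2:ℤ) (M+1), H i * H (i + 0)
      = 4*s^2 * ∑ i ∈ Finset.Icc (2:ℤ) (M+1), F (i + -1) * F (i + -1) := by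
    rw [Finset.mul_sum]
    refine Finset.sum_congr rfl fun i hi => ?_
    simp only [Finset.mem_Icc] at hi
    rw [hH i, if_neg (by omega), if_pos (show 2 ≤ i ∧ i ≤ M+1 by omega)]
    rw [hH (i+0), if_neg (by omega), if_pos (show 2 ≤ i+0 ∧ i+0 ≤ M+1 by omega)]
    rw [show i - 1 = i + -1 by ring, show i + 0 - 1 = i + -1 by ring]
    ring
  have z2 : ∑ i ∈ Finset.Icc (M+2:ℤ) (M+2), H i * H (i + 0)
      = (s*F (M+1) - 2*F M) * (s*F (M+1) - 2*F M) := by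
    rw [sum_Icc_singleton, hH (M+2), if_neg (by omega), if_neg (by omega), if_pos rfl,
      hH (M+2+0), if_neg (by omega), if_neg (by omega), if_pos (show M+2+0 = M+2 by omega)]
  have z3 : ∑ i ∈ Finset.Icc (M+3:ℤ) (2*M+2), H i * H (i + 0)
      = 4*s^2 * ∑ i ∈ Finset.Icc (M+3:ℤ) (2*M+2), F (i + -(2*M+3)) * F (i + -(2*M+3)) := by
    rw [Finset.mul_sum]
    refine Finset.sum_congr rfl fun i hi => ?_
    simp only [Finset.mem_Icc] at hi
    rw [hH i, if_neg (by omega), if_neg (by omega), if_neg (by omega),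
      if_pos (show M+3 ≤ i ∧ i ≤ 2*M+2 by omega)]
    rw [hH (i+0), if_neg (by omega), if_neg (by omega), if_neg (by omega),
      if_pos (show M+3 ≤ i+0 ∧ i+0 ≤ 2*M+2 by omega)]
    rw [show i - (2*M+3) = i + -(2*M+3) by ring, show i + 0 - (2*M+3) = i + -(2*M+3) by ring]
    ring
  have z4 : ∑ i ∈ Finset.Icc (2*M+3:ℤ) (2*M+3), H i * H (i + 0) = 1 := by
    rw [sum_Icc_singleton, hH (2*M+3), if_neg (by omega), if_neg (by omega), if_neg (by omega),
      if_neg (by omega), if_pos rfl,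
      hH (2*M+3+0), if_neg (by omega), if_neg (by omega), if_neg (by omega),
      if_neg (by omega), if_pos (show 2*M+3+0 = 2*M+3 by omega)]
    norm_num
  rw [z0, z1, z2, z3, z4]
  have T1 := telescope h0 h1 hrec (-1) (-1) 2 (M+1) (by omega)
  have T2 := telescope h0 h1 hrec (-(2*M+3)) (-(2*M+3)) (M+3) (2*M+2) (by omega)
  have hP0 : (-1:ℝ)^((2:ℤ)) = 1 := by norm_num
  have hPz : (-1:ℝ)^((0:ℤ)) = 1 := by norm_num
  have hP3 : (-1:ℝ)^(M+1) = -1 := zpow_odd (by omega)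
  have hP4 : (-1:ℝ)^(1-M) = -1 := zpow_odd (by omega)
  have qFnM : F (-M) = -F M := Fneg_even h0 h1 hrec (by omega)
  have qFnM1 : F (-(M+1)) = F (M+1) := Fneg_odd h0 h1 hrec (by omega)
  have qFn1 : F (-1) = 1 := Fneg1 h0 h1 hrec
  linear_combination (norm := (ring_nf; try ring1)) 4*s*T1 + 4*s*T2
    + (2*F 0*s)*hP0 + (2*F 0*s)*hP3 + (2*F 0*s)*hP4 + (2*F 0*s)*hPz
    + (-4*F (-(M+1))*s)*qFnM + (4*F M*s)*qFnM1 + (4*F 0*s)*qFn1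
    + (-4*F 0*s)*h1 + (-4*F M)*(hrec M)

lemma caseB (h0 : F 0 = 0) (h1 : F 1 = 1)
    (hrec : ∀ n : ℤ, F (n + 2) = s * F (n + 1) + F n)
    (hM2 : 2 ≤ M) (hMp : M % 2 = 0)
    (hH : ∀ i : ℤ, H i =
      if i = 1 then 1
      else if 2 ≤ i ∧ i ≤ M + 1 then 2 * s * F (i - 1)
      else if i = M + 2 then s * F (M + 1) - 2 * F M
      else if M + 3 ≤ i ∧ i ≤ 2 * M + 2 then 2 * s * F (i - (2 * M + 3))
      else if i = 2 * M + 3 then -1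
      else 0)
    (hA : ∀ d : ℤ, A d = ∑ i ∈ Finset.Icc (1 : ℤ) (2 * M + 3), H i * H (i + d)) :
    A (M+1) = 0 := by
  have hout := Hout hM2 hH
  rw [hA (M+1)]
  rw [sum_Icc_split' _ (show (1:ℤ) ≤ 2 by omega) (show (1:ℤ) ≤ 2*M+3 by omega) (by ring)]
  rw [sum_Icc_split' _ (show (2:ℤ) ≤ M+2 by omega) (show M+1 ≤ 2*M+3 by omega) (by ring)]
  rw [sum_Icc_split' _ (show M+2 ≤ M+3 by omega) (show M+2 ≤ 2*M+3 by omega) (by ring)]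
  have b0 : ∑ i ∈ Finset.Icc (1:ℤ) 1, H i * H (i + (M+1)) = s*F (M+1) - 2*F M := by
    rw [sum_Icc_singleton, hH 1, if_pos rfl, hH (1+(M+1)), if_neg (by omega),
      if_neg (by omega), if_pos (show 1+(M+1) = M+2 by omega)]
    ring
  have b1 : ∑ i ∈ Finset.Icc (2:ℤ) (M+1), H i * H (i + (M+1))
      = 4*s^2 * ∑ i ∈ Finset.Icc (2:ℤ) (M+1), F (i + -1) * F (i + (-M-2)) := by
    rw [Finset.mul_sum]
    refine Finset.sum_congr rfl fun i hi => ?_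
    simp only [Finset.mem_Icc] at hi
    rw [hH i, if_neg (by omega), if_pos (show 2 ≤ i ∧ i ≤ M+1 by omega)]
    rw [hH (i+(M+1)), if_neg (by omega), if_neg (by omega), if_neg (by omega),
      if_pos (show M+3 ≤ i+(M+1) ∧ i+(M+1) ≤ 2*M+2 by omega)]
    rw [show i - 1 = i + -1 by ring, show i+(M+1) - (2*M+3) = i + (-M-2) by ring]
    ring
  have b2 : ∑ i ∈ Finset.Icc (M+2:ℤ) (M+2), H i * H (i + (M+1))
      = -(s*F (M+1) - 2*F M) := by
    rw [sum_Icc_singleton, hH (M+2), if_neg (by omega), if_neg (by omega), if_pos rfl,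
      hH (M+2+(M+1)), if_neg (by omega), if_neg (by omega), if_neg (by omega),
      if_neg (by omega), if_pos (show M+2+(M+1) = 2*M+3 by omega)]
    ring
  have b3 : ∑ i ∈ Finset.Icc (M+3:ℤ) (2*M+3), H i * H (i + (M+1)) = 0 := by
    refine Finset.sum_eq_zero fun i hi => ?_
    simp only [Finset.mem_Icc] at hi
    rw [hout (i+(M+1)) (by omega), mul_zero]
  rw [b0, b1, b2, b3]
  have T := telescope h0 h1 hrec (-1) (-M-2) 2 (M+1) (by omega)
  have hP0 : (-1:ℝ)^((2:ℤ)) = 1 := by norm_num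
  have hP3 : (-1:ℝ)^(M+1) = -1 := zpow_odd (by omega)
  have qFnM1 : F (-(M+1)) = F (M+1) := Fneg_odd h0 h1 hrec (by omega)
  have qFn1 : F (-1) = 1 := Fneg1 h0 h1 hrec
  linear_combination (norm := (ring_nf; try ring1)) 4*s*T
    + (2*F (-(M+1))*s)*hP0 + (2*F (-(M+1))*s)*hP3
    + (-4*F 1*s)*qFnM1 + (4*F (M+1)*s)*qFn1 + (-4*F (M+1)*s)*h1

lemma caseC (h0 : F 0 = 0) (h1 : F 1 = 1)
    (hrec : ∀ n : ℤ, F (n + 2) = s * F (n + 1) + F n)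
    (hM2 : 2 ≤ M) (hMp : M % 2 = 0)
    (hH : ∀ i : ℤ, H i =
      if i = 1 then 1
      else if 2 ≤ i ∧ i ≤ M + 1 then 2 * s * F (i - 1)
      else if i = M + 2 then s * F (M + 1) - 2 * F M
      else if M + 3 ≤ i ∧ i ≤ 2 * M + 2 then 2 * s * F (i - (2 * M + 3))
      else if i = 2 * M + 3 then -1
      else 0)
    (hA : ∀ d : ℤ, A d = ∑ i ∈ Finset.Icc (1 : ℤ) (2 * M + 3), H i * H (i + d))
    (d : ℤ) (hd1 : M+2 ≤ d) (hd2 : d ≤ 2*M+1) :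
    A d = 0 := by
  have hout := Hout hM2 hH
  rw [hA d]
  rw [sum_Icc_split' _ (show (1:ℤ) ≤ 2 by omega) (show (1:ℤ) ≤ 2*M+3 by omega) (by ring)]
  rw [sum_Icc_split' _ (show (2:ℤ) ≤ 2*M+3-d by omega) (show 2*M+2-d ≤ 2*M+3 by omega) (by ring)]
  rw [sum_Icc_split' _ (show 2*M+3-d ≤ 2*M+4-d by omega) (show 2*M+3-d ≤ 2*M+3 by omega) (by ring)]
  rw [sum_Icc_split' _ (show 2*M+4-d ≤ M+2 by omega) (show M+1 ≤ 2*M+3 by omega) (by ring)]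
  rw [sum_Icc_split' _ (show M+2 ≤ M+3 by omega) (show M+2 ≤ 2*M+3 by omega) (by ring)]
  have c0 : ∑ i ∈ Finset.Icc (1:ℤ) 1, H i * H (i + d) = 2*s*F (d-2*M-2) := by
    rw [sum_Icc_singleton, hH 1, if_pos rfl, hH (1+d), if_neg (by omega), if_neg (by omega),
      if_neg (by omega), if_pos (show M+3 ≤ 1+d ∧ 1+d ≤ 2*M+2 by omega)]
    rw [show 1+d - (2*M+3) = d-2*M-2 by ring]
    ring
  have c1 : ∑ i ∈ Finset.Icc (2:ℤ) (2*M+2-d), H i * H (i + d)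
      = 4*s^2 * ∑ i ∈ Finset.Icc (2:ℤ) (2*M+2-d), F (i + -1) * F (i + (d - (2*M+3))) := by
    rw [Finset.mul_sum]
    refine Finset.sum_congr rfl fun i hi => ?_
    simp only [Finset.mem_Icc] at hi
    rw [hH i, if_neg (by omega), if_pos (show 2 ≤ i ∧ i ≤ M+1 by omega)]
    rw [hH (i+d), if_neg (by omega), if_neg (by omega), if_neg (by omega),
      if_pos (show M+3 ≤ i+d ∧ i+d ≤ 2*M+2 by omega)]
    rw [show i - 1 = i + -1 by ring, show i+d - (2*M+3) = i + (d - (2*M+3)) by ring]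
    ring
  have c2 : ∑ i ∈ Finset.Icc (2*M+3-d:ℤ) (2*M+3-d), H i * H (i + d)
      = -(2*s*F (2*M+2-d)) := by
    rw [sum_Icc_singleton, hH (2*M+3-d), if_neg (by omega),
      if_pos (show 2 ≤ 2*M+3-d ∧ 2*M+3-d ≤ M+1 by omega),
      hH (2*M+3-d+d), if_neg (by omega), if_neg (by omega), if_neg (by omega),
      if_neg (by omega), if_pos (show 2*M+3-d+d = 2*M+3 by omega)]
    rw [show 2*M+3-d - 1 = 2*M+2-d by ring]
    ring
  have c3 : ∑ i ∈ Finset.Icc (2*M+4-d:ℤ) (M+1), H i * H (i + d) = 0 := by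
    refine Finset.sum_eq_zero fun i hi => ?_
    simp only [Finset.mem_Icc] at hi
    rw [hout (i+d) (by omega), mul_zero]
  have c4 : ∑ i ∈ Finset.Icc (M+2:ℤ) (M+2), H i * H (i + d) = 0 := by
    rw [sum_Icc_singleton, hout (M+2+d) (by omega), mul_zero]
  have c5 : ∑ i ∈ Finset.Icc (M+3:ℤ) (2*M+3), H i * H (i + d) = 0 := by
    refine Finset.sum_eq_zero fun i hi => ?_
    simp only [Finset.mem_Icc] at hi
    rw [hout (i+d) (by omega), mul_zero]
  rw [c0, c1, c2, c3, c4, c5]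
  have T := telescope h0 h1 hrec (-1) (d - (2*M+3)) 2 (2*M+2-d) (by omega)
  have hP0 : (-1:ℝ)^((2:ℤ)) = 1 := by norm_num
  have qFn1 : F (-1) = 1 := Fneg1 h0 h1 hrec
  rcases Int.emod_two_eq_zero_or_one d with hpar | hpar
  · have hP6 : (-1:ℝ)^(2*M+2-d) = 1 := zpow_even (by omega)
    have qFn2M2d : F (-(2*M+2-d)) = -F (2*M+2-d) := Fneg_even h0 h1 hrec (by omega)
    linear_combination (norm := (ring_nf; try ring1)) 4*s*T
      + (2*F (-(2*M+2-d))*s)*hP0 + (2*F (-(2*M+2-d))*s)*hP6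
      + (-4*F 1*s + 6*s)*qFn2M2d + (4*F (2*M+2-d)*s)*qFn1 + (4*F (2*M+2-d)*s)*h1
  · have hP6 : (-1:ℝ)^(2*M+2-d) = -1 := zpow_odd (by omega)
    have qFn2M2d : F (-(2*M+2-d)) = F (2*M+2-d) := Fneg_odd h0 h1 hrec (by omega)
    linear_combination (norm := (ring_nf; try ring1)) 4*s*T
      + (2*F (-(2*M+2-d))*s)*hP0 + (2*F (-(2*M+2-d))*s)*hP6
      + (-4*F 1*s + 2*s)*qFn2M2d + (4*F (2*M+2-d)*s)*qFn1 + (-4*F (2*M+2-d)*s)*h1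


set_option maxHeartbeats 2000000 in
lemma caseA (h0 : F 0 = 0) (h1 : F 1 = 1)
    (hrec : ∀ n : ℤ, F (n + 2) = s * F (n + 1) + F n)
    (hM2 : 2 ≤ M) (hMp : M % 2 = 0)
    (hH : ∀ i : ℤ, H i =
      if i = 1 then 1
      else if 2 ≤ i ∧ i ≤ M + 1 then 2 * s * F (i - 1)
      else if i = M + 2 then s * F (M + 1) - 2 * F M
      else if M + 3 ≤ i ∧ i ≤ 2 * M + 2 then 2 * s * F (i - (2 * M + 3))
      else if i = 2 * M + 3 then -1
      else 0)
    (hA : ∀ d : ℤ, A d = ∑ i ∈ Finset.Icc (1 : ℤ) (2 * M + 3), H i * H (i + d))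
    (d : ℤ) (hd1 : 1 ≤ d) (hd2 : d ≤ M) :
    A d = 0 := by
  have hout := Hout hM2 hH
  rw [hA d]
  rw [sum_Icc_split' _ (show (1:ℤ) ≤ 2 by omega) (show (1:ℤ) ≤ 2*M+3 by omega) (by ring)]
  rw [sum_Icc_split' _ (show (2:ℤ) ≤ M+2-d by omega) (show M+1-d ≤ 2*M+3 by omega) (by ring)]
  rw [sum_Icc_split' _ (show M+2-d ≤ M+3-d by omega) (show M+2-d ≤ 2*M+3 by omega) (by ring)]
  rw [sum_Icc_split' _ (show M+3-d ≤ M+2 by omega) (show M+1 ≤ 2*M+3 by omega) (by ring)]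
  rw [sum_Icc_split' _ (show M+2 ≤ M+3 by omega) (show M+2 ≤ 2*M+3 by omega) (by ring)]
  rw [sum_Icc_split' _ (show M+3 ≤ 2*M+3-d by omega) (show 2*M+2-d ≤ 2*M+3 by omega) (by ring)]
  rw [sum_Icc_split' _ (show 2*M+3-d ≤ 2*M+4-d by omega) (show 2*M+3-d ≤ 2*M+3 by omega) (by ring)]
  rw [sum_Icc_split' _ (show 2*M+4-d ≤ 2*M+3 by omega) (show 2*M+2 ≤ 2*M+3 by omega) (by ring)]
  have p0 : ∑ i ∈ Finset.Icc (1:ℤ) 1, H i * H (i + d) = 2*s*F d := by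
    rw [sum_Icc_singleton, hH 1, if_pos rfl, hH (1+d), if_neg (by omega),
      if_pos (show 2 ≤ 1+d ∧ 1+d ≤ M+1 by omega)]
    rw [show 1+d-1 = d by ring]
    ring
  have p1 : ∑ i ∈ Finset.Icc (2:ℤ) (M+1-d), H i * H (i + d)
      = 4*s^2 * ∑ i ∈ Finset.Icc (2:ℤ) (M+1-d), F (i + -1) * F (i + (d-1)) := by
    rw [Finset.mul_sum]
    refine Finset.sum_congr rfl fun i hi => ?_
    simp only [Finset.mem_Icc] at hi
    rw [hH i, if_neg (by omega), if_pos (show 2 ≤ i ∧ i ≤ M+1 by omega)]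
    rw [hH (i+d), if_neg (by omega), if_pos (show 2 ≤ i+d ∧ i+d ≤ M+1 by omega)]
    rw [show i - 1 = i + -1 by ring, show i+d-1 = i + (d-1) by ring]
    ring
  have p2 : ∑ i ∈ Finset.Icc (M+2-d:ℤ) (M+2-d), H i * H (i + d)
      = 2*s*F (M+1-d) * (s*F (M+1) - 2*F M) := by
    rw [sum_Icc_singleton, hH (M+2-d), if_neg (by omega),
      if_pos (show 2 ≤ M+2-d ∧ M+2-d ≤ M+1 by omega),
      hH (M+2-d+d), if_neg (by omega), if_neg (by omega),
      if_pos (show M+2-d+d = M+2 by omega)]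
    rw [show M+2-d-1 = M+1-d by ring]
  have p3 : ∑ i ∈ Finset.Icc (M+3-d:ℤ) (M+1), H i * H (i + d)
      = 4*s^2 * ∑ i ∈ Finset.Icc (M+3-d:ℤ) (M+1), F (i + -1) * F (i + (d - (2*M+3))) := by
    rw [Finset.mul_sum]
    refine Finset.sum_congr rfl fun i hi => ?_
    simp only [Finset.mem_Icc] at hi
    rw [hH i, if_neg (by omega), if_pos (show 2 ≤ i ∧ i ≤ M+1 by omega)]
    rw [hH (i+d), if_neg (by omega), if_neg (by omega), if_neg (by omega),
      if_pos (show M+3 ≤ i+d ∧ i+d ≤ 2*M+2 by omega)]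
    rw [show i - 1 = i + -1 by ring, show i+d-(2*M+3) = i + (d - (2*M+3)) by ring]
    ring
  have p4 : ∑ i ∈ Finset.Icc (M+2:ℤ) (M+2), H i * H (i + d)
      = (s*F (M+1) - 2*F M) * (2*s*F (d-M-1)) := by
    rw [sum_Icc_singleton, hH (M+2), if_neg (by omega), if_neg (by omega), if_pos rfl,
      hH (M+2+d), if_neg (by omega), if_neg (by omega), if_neg (by omega),
      if_pos (show M+3 ≤ M+2+d ∧ M+2+d ≤ 2*M+2 by omega)]
    rw [show M+2+d-(2*M+3) = d-M-1 by ring]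
  have p5 : ∑ i ∈ Finset.Icc (M+3:ℤ) (2*M+2-d), H i * H (i + d)
      = 4*s^2 * ∑ i ∈ Finset.Icc (M+3:ℤ) (2*M+2-d), F (i + -(2*M+3)) * F (i + (d - (2*M+3))) := by
    rw [Finset.mul_sum]
    refine Finset.sum_congr rfl fun i hi => ?_
    simp only [Finset.mem_Icc] at hi
    rw [hH i, if_neg (by omega), if_neg (by omega), if_neg (by omega),
      if_pos (show M+3 ≤ i ∧ i ≤ 2*M+2 by omega)]
    rw [hH (i+d), if_neg (by omega), if_neg (by omega), if_neg (by omega),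
      if_pos (show M+3 ≤ i+d ∧ i+d ≤ 2*M+2 by omega)]
    rw [show i - (2*M+3) = i + -(2*M+3) by ring, show i+d-(2*M+3) = i + (d - (2*M+3)) by ring]
    ring
  have p6 : ∑ i ∈ Finset.Icc (2*M+3-d:ℤ) (2*M+3-d), H i * H (i + d)
      = -(2*s*F (-d)) := by
    rw [sum_Icc_singleton, hH (2*M+3-d), if_neg (by omega), if_neg (by omega), if_neg (by omega),
      if_pos (show M+3 ≤ 2*M+3-d ∧ 2*M+3-d ≤ 2*M+2 by omega),
      hH (2*M+3-d+d), if_neg (by omega), if_neg (by omega), if_neg (by omega),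
      if_neg (by omega), if_pos (show 2*M+3-d+d = 2*M+3 by omega)]
    rw [show 2*M+3-d-(2*M+3) = -d by ring]
    ring
  have p7 : ∑ i ∈ Finset.Icc (2*M+4-d:ℤ) (2*M+2), H i * H (i + d) = 0 := by
    refine Finset.sum_eq_zero fun i hi => ?_
    simp only [Finset.mem_Icc] at hi
    rw [hout (i+d) (by omega), mul_zero]
  have p8 : ∑ i ∈ Finset.Icc (2*M+3:ℤ) (2*M+3), H i * H (i + d) = 0 := by
    rw [sum_Icc_singleton, hout (2*M+3+d) (by omega), mul_zero]
  rw [p0, p1, p2, p3, p4, p5, p6, p7, p8]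
  have T1 := telescope h0 h1 hrec (-1) (d-1) 2 (M+1-d) (by omega)
  have T2 := telescope h0 h1 hrec (-1) (d-(2*M+3)) (M+3-d) (M+1) (by omega)
  have T3 := telescope h0 h1 hrec (-(2*M+3)) (d-(2*M+3)) (M+3) (2*M+2-d) (by omega)
  have hP3 : (-1:ℝ)^(M+1) = -1 := zpow_odd (by omega)
  have hP4 : (-1:ℝ)^(1-M) = -1 := zpow_odd (by omega)
  have qFnM1 : F (-(M+1)) = F (M+1) := Fneg_odd h0 h1 hrec (by omega)
  have qFnM : F (-M) = -F M := Fneg_even h0 h1 hrec (by omega)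
  have qFn1 : F (-1) = 1 := Fneg1 h0 h1 hrec
  have hP0 : (-1:ℝ)^((2:ℤ)) = 1 := by norm_num
  rcases Int.emod_two_eq_zero_or_one d with hpar | hpar
  · -- d even
    have hP1 : (-1:ℝ)^(M+1-d) = -1 := zpow_odd (by omega)
    have hP2 : (-1:ℝ)^(M+3-d) = -1 := zpow_odd (by omega)
    have hP5 : (-1:ℝ)^(-d) = 1 := zpow_even (by omega)
    have qFnd : F (-d) = -F d := Fneg_even h0 h1 hrec (by omega)
    have qFnM1d : F (-(M+1-d)) = F (M+1-d) := Fneg_odd h0 h1 hrec (by omega)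
    have qFnM2d : F (-(M+2-d)) = -F (M+2-d) := Fneg_even h0 h1 hrec (by omega)
    have qFn2M2d : F (-(2*M+2-d)) = -F (2*M+2-d) := Fneg_even h0 h1 hrec (by omega)
    have hAdd := Fadd h0 h1 hrec (M+1-d) (M+1)
    have hD := docagne h0 h1 hrec (M+1-d) (M+1)
    rw [zpow_odd (show (M+1-d) % 2 = 1 by omega)] at hD
    have hr1 := hrec (M-d)
    linear_combination (norm := (ring_nf; try ring1)) 4*s*T1 + 4*s*T2 + 4*s*T3
      + (2*F d*s)*hP1 + (2*F (d-2*M-2)*s)*hP2 + (2*F (d-2*M-2)*s)*hP3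
      + (2*F d*s)*hP4 + (2*F d*s)*hP5
      + (4*F (-1)*s - 2*s)*qFnd + (-4*F M*s + 2*F (M+1)*s^2 - 4*F (-M)*s)*qFnM1d
      + (4*F (M+1)*s)*qFnM2d + (-4*F (M+2-d)*s)*qFnM1 + (-4*F (M+1-d)*s)*qFnM
      + (-4*F d*s)*qFn1 + (-4*s)*qFn2M2d + (-4*F d*s)*h1
      + (4*s)*hAdd + (-4*s)*hD + (-4*F (M+1)*s)*hr1
  · -- d odd
    have hP1 : (-1:ℝ)^(M+1-d) = 1 := zpow_even (by omega)
    have hP2 : (-1:ℝ)^(M+3-d) = 1 := zpow_even (by omega)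
    have hP5 : (-1:ℝ)^(-d) = -1 := zpow_odd (by omega)
    have qFnd : F (-d) = F d := Fneg_odd h0 h1 hrec (by omega)
    have qFnM1d : F (-(M+1-d)) = -F (M+1-d) := Fneg_even h0 h1 hrec (by omega)
    have qFnM2d : F (-(M+2-d)) = F (M+2-d) := Fneg_odd h0 h1 hrec (by omega)
    linear_combination (norm := (ring_nf; try ring1)) 4*s*T1 + 4*s*T2 + 4*s*T3
      + (2*F d*s)*hP1 + (2*F (d-2*M-2)*s)*hP2 + (2*F (d-2*M-2)*s)*hP3
      + (2*F d*s)*hP4 + (2*F d*s)*hP5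
      + (4*F (-1)*s - 2*s)*qFnd + (-4*F M*s + 2*F (M+1)*s^2 - 4*F (-M)*s)*qFnM1d
      + (4*F (M+1)*s)*qFnM2d + (-4*F (M+2-d)*s)*qFnM1 + (4*F (M+1-d)*s)*qFnM
      + (4*F d*s)*qFn1 + (-4*F d*s)*h1

end HuffmanAux

theorem huffman_canonical_delta_correlation (s : ℝ) (hs : s ≠ 0) (F : ℤ → ℝ)
    (h0 : F 0 = 0) (h1 : F 1 = 1)
    (hrec : ∀ n : ℤ, F (n + 2) = s * F (n + 1) + F n)
    (M : ℤ) (hM2 : 2 ≤ M) (hMeven : Even M)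
    (H : ℤ → ℝ)
    (hH : ∀ i : ℤ, H i =
      if i = 1 then 1
      else if 2 ≤ i ∧ i ≤ M + 1 then 2 * s * F (i - 1)
      else if i = M + 2 then s * F (M + 1) - 2 * F M
      else if M + 3 ≤ i ∧ i ≤ 2 * M + 2 then 2 * s * F (i - (2 * M + 3))
      else if i = 2 * M + 3 then -1
      else 0)
    (A : ℤ → ℝ)
    (hA : ∀ d : ℤ, A d = ∑ i ∈ Finset.Icc (1 : ℤ) (2 * M + 3), H i * H (i + d)) :
    A 0 = 2 + s ^ 2 * (F (M + 1)) ^ 2 + 4 * F M * F (M + 2) ∧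
      A (2 * M + 2) = -1 ∧ A (-(2 * M + 2)) = -1 ∧
      ∀ d : ℤ, 0 < |d| → |d| < 2 * M + 2 → A d = 0 := by
  have hMp : M % 2 = 0 := Int.even_iff.mp hMeven
  have hsymm := HuffmanAux.Asymm hM2 hH hA
  refine ⟨HuffmanAux.caseZero h0 h1 hrec hM2 hMp hH hA,
    HuffmanAux.caseD hM2 hH hA, ?_, ?_⟩
  · rw [hsymm (2*M+2)]
    exact HuffmanAux.caseD hM2 hH hA
  · intro d habs1 habs2
    have hne : d ≠ 0 := by
      intro h
      rw [h] at habs1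
      simp at habs1
    have hlt : -(2*M+2) < d ∧ d < 2*M+2 := abs_lt.mp habs2
    have main : ∀ e : ℤ, 1 ≤ e → e ≤ 2*M+1 → A e = 0 := by
      intro e he1 he2
      rcases (by omega : (1 ≤ e ∧ e ≤ M) ∨ e = M+1 ∨ (M+2 ≤ e ∧ e ≤ 2*M+1)) with h | h | h
      · exact HuffmanAux.caseA h0 h1 hrec hM2 hMp hH hA e h.1 h.2
      · rw [h]
        exact HuffmanAux.caseB h0 h1 hrec hM2 hMp hH hA
      · exact HuffmanAux.caseC h0 h1 hrec hM2 hMp hH hA e h.1 h.2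
    rcases lt_or_gt_of_ne hne with hneg | hpos
    · have hdd : A d = A (-(-d)) := by rw [neg_neg]
      rw [hdd, hsymm (-d)]
      exact main (-d) (by omega) (by omega)
    · exact main d (by omega) (by omega)
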